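/- Let N ≥ 1, let p > 1 be a (constant) real number, let w₁, w₂ : ℝ^N → ℝ be differentiable at a point x ∈ ℝ^N with w₁(x) > 0 and w₂(x) > 0. Then the function y ↦ w₁(y)^p / w₂(y)^{p−1} is differentiable at x with gradient ∇(w₁^p / w₂^{p−1})(x) = p (w₁(x)/w₂(x))^{p−1} ∇w₁(x) − (p−1) (w₁(x)/w₂(x))^p ∇w₂(x); consequently |∇w₁(x)|^p − |∇w₂(x)|^{p−2} ⟨∇w₂(x), ∇(w₁^p/w₂^{p−1})(x)⟩ = |∇w₁(x)|^p + (p−1)(w₁(x)/w₂(x))^p |∇w₂(x)|^p − p (w₁(x)/w₂(x))^{p−1} |∇w₂(x)|^{p−2} ⟨∇w₂(x), ∇w₁(x)⟩, and this common value is nonnegative. -/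

import Mathlib

open scoped RealInnerProductSpace
open Filter

/-- Constant-exponent Picone identity `L₁(w₁,w₂) = L₂(w₁,w₂) ≥ 0`
(Lemma 8 of the paper) at a single point: differentiability of the quotient
`w₁^p / w₂^{p-1}`, the identity between the two expressions, and
nonnegativity of the common value. -/
theorem picone_identity_constant_exponent
    (N : ℕ) (hN : 1 ≤ N) (p : ℝ) (hp : 1 < p)
    (w₁ w₂ : EuclideanSpace ℝ (Fin N) → ℝ) (x : EuclideanSpace ℝ (Fin N))
    (hw₁ : DifferentiableAt ℝ w₁ x) (hw₂ : DifferentiableAt ℝ w₂ x)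
    (hw₁x : 0 < w₁ x) (hw₂x : 0 < w₂ x) :
    HasGradientAt (fun y => w₁ y ^ p / w₂ y ^ (p - 1))
        ((p * (w₁ x / w₂ x) ^ (p - 1)) • gradient w₁ x
          - ((p - 1) * (w₁ x / w₂ x) ^ p) • gradient w₂ x) x ∧
      ‖gradient w₁ x‖ ^ p
          - ‖gradient w₂ x‖ ^ (p - 2)
            * ⟪gradient w₂ x,
                (p * (w₁ x / w₂ x) ^ (p - 1)) • gradient w₁ x
                  - ((p - 1) * (w₁ x / w₂ x) ^ p) • gradient w₂ x⟫
        = ‖gradient w₁ x‖ ^ p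
            + (p - 1) * (w₁ x / w₂ x) ^ p * ‖gradient w₂ x‖ ^ p
            - p * (w₁ x / w₂ x) ^ (p - 1) * ‖gradient w₂ x‖ ^ (p - 2)
              * ⟪gradient w₂ x, gradient w₁ x⟫ ∧
      0 ≤ ‖gradient w₁ x‖ ^ p
            + (p - 1) * (w₁ x / w₂ x) ^ p * ‖gradient w₂ x‖ ^ p
            - p * (w₁ x / w₂ x) ^ (p - 1) * ‖gradient w₂ x‖ ^ (p - 2)
              * ⟪gradient w₂ x, gradient w₁ x⟫ := by
  set g₁ := gradient w₁ x with hg₁def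
  set g₂ := gradient w₂ x with hg₂def
  set t := w₁ x / w₂ x with htdef
  have ht : 0 < t := div_pos hw₁x hw₂x
  refine ⟨?_, ?_, ?_⟩
  · -- gradient computation
    have hF₁ : HasFDerivAt w₁ ((InnerProductSpace.toDual ℝ _) g₁) x :=
      hw₁.hasGradientAt.hasFDerivAt
    have hF₂ : HasFDerivAt w₂ ((InnerProductSpace.toDual ℝ _) g₂) x :=
      hw₂.hasGradientAt.hasFDerivAt
    have h1 := hF₁.rpow_const (p := p) (Or.inl hw₁x.ne')
    have h2 := hF₂.rpow_const (p := -(p-1)) (Or.inl hw₂x.ne')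
    have hmul := h1.mul h2
    have hev : (fun y => w₁ y ^ p / w₂ y ^ (p - 1))
        =ᶠ[nhds x] fun y => w₁ y ^ p * w₂ y ^ (-(p-1)) := by
      have hpos : ∀ᶠ y in nhds x, 0 < w₂ y :=
        hw₂.continuousAt.eventually (eventually_gt_nhds hw₂x)
      filter_upwards [hpos] with y hy
      rw [Real.rpow_neg hy.le, div_eq_mul_inv]
    have hF := hmul.congr_of_eventuallyEq hev
    rw [hasGradientAt_iff_hasFDerivAt]
    have heq : (InnerProductSpace.toDual ℝ (EuclideanSpace ℝ (Fin N)))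
        ((p * t ^ (p - 1)) • g₁ - ((p - 1) * t ^ p) • g₂)
        = w₁ x ^ p • ((-(p-1) * w₂ x ^ (-(p-1) - 1)) • (InnerProductSpace.toDual ℝ _) g₂)
          + w₂ x ^ (-(p-1)) • ((p * w₁ x ^ (p - 1)) • (InnerProductSpace.toDual ℝ _) g₁) := by
      have hc₁ : p * t ^ (p - 1) = w₂ x ^ (-(p-1)) * (p * w₁ x ^ (p - 1)) := by
        rw [htdef, Real.div_rpow hw₁x.le hw₂x.le, Real.rpow_neg hw₂x.le]
        ring
      have hc₂ : -((p - 1) * t ^ p) = w₁ x ^ p * (-(p-1) * w₂ x ^ (-(p-1) - 1)) := by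
        have : -(p-1) - 1 = -p := by ring
        rw [htdef, Real.div_rpow hw₁x.le hw₂x.le, this, Real.rpow_neg hw₂x.le]
        ring
      rw [map_sub, map_smul, map_smul]
      match_scalars
      · linear_combination hc₁
      · linear_combination hc₂
    rw [heq]
    exact hF
  · -- identity
    have hb : ‖g₂‖ ^ (p - 2) * ‖g₂‖ ^ (2:ℕ) = ‖g₂‖ ^ p := by
      rcases eq_or_lt_of_le (norm_nonneg g₂) with h | h
      · rw [← h]
        rw [Real.zero_rpow (by linarith : p ≠ 0)]
        norm_num
      · rw [← Real.rpow_natCast ‖g₂‖ 2, ← Real.rpow_add h]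
        norm_num
    rw [inner_sub_right, real_inner_smul_right, real_inner_smul_right,
        real_inner_self_eq_norm_sq]
    linear_combination ((p - 1) * t ^ p) * hb
  · -- nonnegativity
    rcases eq_or_lt_of_le (norm_nonneg g₂) with hb0 | hb0
    · have hz : g₂ = 0 := by simpa using (norm_eq_zero.mp hb0.symm)
      rw [hz]
      simp [Real.zero_rpow (by linarith : p ≠ 0)]
      positivity
    · set a := ‖g₁‖
      set b := ‖g₂‖
      set s := ⟪g₂, g₁⟫
      have hs : s ≤ b * a := real_inner_le_norm g₂ g₁
      have hconj : p.HolderConjugate (p / (p - 1)) := Real.HolderConjugate.conjExponent hp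
      set X := t * b with hXdef
      have hX : 0 < X := mul_pos ht hb0
      have hyoung := Real.young_inequality_of_nonneg (norm_nonneg g₁)
        (Real.rpow_nonneg hX.le (p-1)) hconj
      -- a * X^(p-1) ≤ a^p / p + (X^(p-1))^(p/(p-1)) / (p/(p-1))
      have hXp : (X ^ (p-1)) ^ (p / (p-1)) = X ^ p := by
        rw [← Real.rpow_mul hX.le]
        congr 1
        field_simp
        rw [div_self (by linarith : p - (1:ℝ) ≠ 0)]
      rw [hXp] at hyoung
      -- so p * X^(p-1) * a ≤ a^p + (p-1) * X^p
      have hy2 : p * (X ^ (p - 1) * a) ≤ a ^ p + (p - 1) * X ^ p := by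
        have hp0 : 0 < p := by linarith
        have hq0 : 0 < p / (p - 1) := div_pos hp0 (by linarith)
        have := mul_le_mul_of_nonneg_left hyoung hp0.le
        calc p * (X ^ (p-1) * a) = p * (a * X ^ (p-1)) := by ring
          _ ≤ p * (a ^ p / p + X ^ p / (p / (p-1))) := this
          _ = a ^ p + (p - 1) * X ^ p := by field_simp
      have hXpow : X ^ (p - 1) = t ^ (p - 1) * b ^ (p - 1) := Real.mul_rpow ht.le hb0.le
      have hXpow2 : X ^ p = t ^ p * b ^ p := Real.mul_rpow ht.le hb0.le
      have hbb : b ^ (p - 2) * b = b ^ (p - 1) := by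
        nth_rewrite 2 [← Real.rpow_one b]
        rw [← Real.rpow_add hb0]
        congr 1
        ring
      have hcoef : 0 ≤ p * t ^ (p - 1) * b ^ (p - 2) := by positivity
      have hkey : p * t ^ (p - 1) * b ^ (p - 2) * s ≤ p * X ^ (p - 1) * a := by
        calc p * t ^ (p - 1) * b ^ (p - 2) * s ≤ p * t ^ (p - 1) * b ^ (p - 2) * (b * a) :=
              mul_le_mul_of_nonneg_left hs hcoef
          _ = p * X ^ (p - 1) * a := by rw [hXpow, ← hbb]; ring
      rw [hXpow2] at hy2
      nlinarith [hy2, hkey]
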